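/- Let |GHZₙ⟩ be the n-qubit GHZ state with n ≥ 3 parties A^(1),…,A^(n). With observables A₀^(1) = A₀^(n) = Z, A₁^(i) = X for 1 ≤ i ≤ n−1, A₁^(n) = (X+Z)/√2, A₂^(n) = (X−Z)/√2, the quantity ⟨A₁^(1)⋯A₁^(n−1)A₁^(n)⟩ + ⟨A₁^(1)⋯A₁^(n−1)A₂^(n)⟩ + ⟨A₀^(1)A₁^(n)⟩ − ⟨A₀^(1)A₂^(n)⟩ + 2⟨A₀^(1)A₀^(n)⟩ evaluated on |GHZₙ⟩ equals 2√2 + 2, which exceeds 4. -/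

import Mathlib

open Matrix

noncomputable section

def PZ : Matrix (Fin 2) (Fin 2) ℂ := !![1, 0; 0, -1]
def PX : Matrix (Fin 2) (Fin 2) ℂ := !![0, 1; 1, 0]

/-- The n-qubit GHZ state (|0…0⟩ + |1…1⟩)/√2. -/
def GHZ (n : ℕ) : (Fin n → Fin 2) → ℂ := fun f =>
  ((Real.sqrt 2 : ℂ))⁻¹ *
    (if (∀ i, f i = 0) then 1 else if (∀ i, f i = 1) then 1 else 0)

/-- Expectation ⟨ψ, (A 0 ⊗ ⋯ ⊗ A (n-1)) ψ⟩ of a product of single-site observables. -/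
def expValN {n : ℕ} (ψ : (Fin n → Fin 2) → ℂ)
    (A : Fin n → Matrix (Fin 2) (Fin 2) ℂ) : ℂ :=
  ∑ f : Fin n → Fin 2, ∑ g : Fin n → Fin 2,
    star (ψ f) * (∏ i, A i (f i) (g i)) * ψ g

lemma ghz_eq (n : ℕ) (hn : 0 < n) (f : Fin n → Fin 2) :
    GHZ n f = ((Real.sqrt 2 : ℂ))⁻¹ *
      ((if f = (fun _ => 0) then 1 else 0) + (if f = (fun _ => 1) then 1 else 0)) := by
  unfold GHZ
  congr 1
  by_cases h0 : f = fun _ => 0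
  · subst h0
    have : ¬ (fun (_ : Fin n) => (0 : Fin 2)) = fun _ => 1 := by
      intro h; exact absurd (congrFun h ⟨0, hn⟩) (by decide)
    simp [this]
  · by_cases h1 : f = fun _ => 1
    · subst h1
      have h2 : ¬ (∀ i : Fin n, (1 : Fin 2) = 0) := fun h => absurd (h ⟨0, hn⟩) (by decide)
      have h0' : ¬ ((fun _ : Fin n => (1 : Fin 2)) = fun _ => 0) :=
        fun h => absurd (congrFun h ⟨0, hn⟩) (by decide)
      simp [h2, h0']
    · have h0' : ¬ ∀ i, f i = 0 := by simpa [funext_iff] using h0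
      have h1' : ¬ ∀ i, f i = 1 := by simpa [funext_iff] using h1
      simp [h0', h1', h0, h1]

lemma expVal_ghz (n : ℕ) (hn : 0 < n) (A : Fin n → Matrix (Fin 2) (Fin 2) ℂ) :
    expValN (GHZ n) A = (2:ℂ)⁻¹ *
      ((∏ i, A i 0 0) + (∏ i, A i 0 1) + (∏ i, A i 1 0) + (∏ i, A i 1 1)) := by
  unfold expValN
  simp only [ghz_eq n hn]
  have hst : star (((Real.sqrt 2 : ℂ))⁻¹) = ((Real.sqrt 2 : ℂ))⁻¹ := by
    simp [Complex.star_def, ← Complex.ofReal_inv]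
  have hc : ((Real.sqrt 2 : ℂ))⁻¹ * ((Real.sqrt 2 : ℂ))⁻¹ = (2:ℂ)⁻¹ := by
    rw [← mul_inv]
    norm_num [← Complex.ofReal_mul, Real.mul_self_sqrt]
  simp only [star_mul', hst, star_add, apply_ite (star : ℂ → ℂ), star_one, star_zero]
  simp only [mul_add, add_mul, mul_ite, ite_mul, one_mul, mul_one, zero_mul, mul_zero,
    Finset.sum_add_distrib, Finset.sum_ite_eq', Finset.mem_univ, if_true]
  ring_nf
  rw [show ((Real.sqrt 2 : ℂ))⁻¹ ^ 2 = (2:ℂ)⁻¹ by rw [sq]; exact hc]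
  ring

lemma prod_last {n : ℕ} (hn : 3 ≤ n) (f : Fin n → ℂ)
    (hmid : ∀ i : Fin n, i.val ≠ n - 1 → f i = 1) :
    ∏ i, f i = f ⟨n - 1, by omega⟩ := by
  apply Finset.prod_eq_single
  · exact fun b _ hb => hmid b (fun h => hb (Fin.ext h))
  · exact fun h => absurd (Finset.mem_univ _) h

lemma prod_two {n : ℕ} (hn : 3 ≤ n) (f : Fin n → ℂ)
    (hmid : ∀ i : Fin n, i.val ≠ 0 → i.val ≠ n - 1 → f i = 1) :
    ∏ i, f i = f ⟨0, by omega⟩ * f ⟨n - 1, by omega⟩ := by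
  apply Finset.prod_eq_mul
  · intro h; rw [Fin.ext_iff] at h; simp at h; omega
  · exact fun c _ hc => hmid c (fun h => hc.1 (Fin.ext h)) (fun h => hc.2 (Fin.ext h))
  · exact fun h => absurd (Finset.mem_univ _) h
  · exact fun h => absurd (Finset.mem_univ _) h

lemma prodA_off {n : ℕ} (hn : 3 ≤ n) (M : Matrix (Fin 2) (Fin 2) ℂ) (a b : Fin 2)
    (hab : PX a b = 1) :
    (∏ i : Fin n, (if i.val < n - 1 then PX else M) a b) = M a b := by
  rw [prod_last hn]
  · simp
  · intro i hi
    have h2 : i.val < n - 1 := by have := i.isLt; omega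
    simp [h2, hab]

lemma prodA_diag {n : ℕ} (hn : 3 ≤ n) (M : Matrix (Fin 2) (Fin 2) ℂ) (a b : Fin 2)
    (hab : PX a b = 0) :
    (∏ i : Fin n, (if i.val < n - 1 then PX else M) a b) = 0 :=
  Finset.prod_eq_zero (Finset.mem_univ (⟨0, by omega⟩ : Fin n))
    (by simp [show (0:ℕ) < n - 1 by omega, hab])

lemma prodB {n : ℕ} (hn : 3 ≤ n) (M : Matrix (Fin 2) (Fin 2) ℂ) (a : Fin 2) :
    (∏ i : Fin n, (if i.val = 0 then PZ else if i.val = n - 1 then M else 1) a a)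
      = PZ a a * M a a := by
  rw [prod_two hn]
  · simp [show n - 1 ≠ 0 by omega]
  · intro i h0 hL
    simp [h0, hL, Matrix.one_apply]

lemma prodB_off {n : ℕ} (hn : 3 ≤ n) (M : Matrix (Fin 2) (Fin 2) ℂ) (a b : Fin 2)
    (hab : PZ a b = 0) :
    (∏ i : Fin n, (if i.val = 0 then PZ else if i.val = n - 1 then M else 1) a b) = 0 :=
  Finset.prod_eq_zero (Finset.mem_univ (⟨0, by omega⟩ : Fin n)) (by simp [hab])

lemma prodC {n : ℕ} (hn : 3 ≤ n) (a : Fin 2) :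
    (∏ i : Fin n, (if i.val = 0 ∨ i.val = n - 1 then PZ else 1) a a)
      = PZ a a * PZ a a := by
  rw [prod_two hn]
  · simp [show n - 1 ≠ 0 by omega]
  · intro i h0 hL
    simp [h0, hL, Matrix.one_apply]

lemma prodC_off {n : ℕ} (hn : 3 ≤ n) (a b : Fin 2) (hab : PZ a b = 0) :
    (∏ i : Fin n, (if i.val = 0 ∨ i.val = n - 1 then PZ else 1) a b) = 0 :=
  Finset.prod_eq_zero (Finset.mem_univ (⟨0, by omega⟩ : Fin n)) (by simp [hab])

theorem stmt_8 (n : ℕ) (hn : 3 ≤ n) :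
    expValN (GHZ n) (fun i => if i.val < n - 1 then PX
        else (Real.sqrt 2 : ℂ)⁻¹ • (PX + PZ))
    + expValN (GHZ n) (fun i => if i.val < n - 1 then PX
        else (Real.sqrt 2 : ℂ)⁻¹ • (PX - PZ))
    + expValN (GHZ n) (fun i => if i.val = 0 then PZ
        else if i.val = n - 1 then (Real.sqrt 2 : ℂ)⁻¹ • (PX + PZ) else 1)
    - expValN (GHZ n) (fun i => if i.val = 0 then PZ
        else if i.val = n - 1 then (Real.sqrt 2 : ℂ)⁻¹ • (PX - PZ) else 1)
    + 2 * expValN (GHZ n) (fun i => if i.val = 0 ∨ i.val = n - 1 then PZ else 1)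
      = ((2 * Real.sqrt 2 + 2 : ℝ) : ℂ) ∧ (2 * Real.sqrt 2 + 2 : ℝ) > 4 := by
  have hn0 : 0 < n := by omega
  set c : ℂ := ((Real.sqrt 2 : ℂ))⁻¹ with hcdef
  have hsq2 : (Real.sqrt 2 : ℂ) * (Real.sqrt 2 : ℂ) = 2 := by
    norm_num [← Complex.ofReal_mul, Real.mul_self_sqrt]
  have hs2ne : (Real.sqrt 2 : ℂ) ≠ 0 :=
    Complex.ofReal_ne_zero.mpr (by positivity)
  constructor
  · rw [expVal_ghz n hn0, expVal_ghz n hn0, expVal_ghz n hn0, expVal_ghz n hn0,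
      expVal_ghz n hn0]
    rw [prodA_diag hn _ 0 0 (by simp [PX]), prodA_diag hn _ 1 1 (by simp [PX]),
      prodA_off hn _ 0 1 (by simp [PX]), prodA_off hn _ 1 0 (by simp [PX]),
      prodA_diag hn _ 0 0 (by simp [PX]), prodA_diag hn _ 1 1 (by simp [PX]),
      prodA_off hn _ 0 1 (by simp [PX]), prodA_off hn _ 1 0 (by simp [PX]),
      prodB hn _ 0, prodB hn _ 1, prodB_off hn _ 0 1 (by simp [PZ]),
      prodB_off hn _ 1 0 (by simp [PZ]),
      prodB hn _ 0, prodB hn _ 1, prodB_off hn _ 0 1 (by simp [PZ]),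
      prodB_off hn _ 1 0 (by simp [PZ]),
      prodC hn 0, prodC hn 1, prodC_off hn 0 1 (by simp [PZ]),
      prodC_off hn 1 0 (by simp [PZ])]
    have e1 : (c • (PX + PZ)) 0 1 = c := by simp [PX, PZ]
    have e2 : (c • (PX + PZ)) 1 0 = c := by simp [PX, PZ]
    have e3 : (c • (PX + PZ)) 0 0 = c := by simp [PX, PZ]
    have e4 : (c • (PX + PZ)) 1 1 = -c := by simp [PX, PZ]
    have f1 : (c • (PX - PZ)) 0 1 = c := by simp [PX, PZ]
    have f2 : (c • (PX - PZ)) 1 0 = c := by simp [PX, PZ]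
    have f3 : (c • (PX - PZ)) 0 0 = -c := by simp [PX, PZ]
    have f4 : (c • (PX - PZ)) 1 1 = c := by simp [PX, PZ]
    rw [e1, e2, e3, e4, f1, f2, f3, f4]
    simp only [PZ, Matrix.of_apply, Matrix.cons_val_zero, Matrix.cons_val_one, Matrix.head_cons,
      Matrix.head_fin_const]
    push_cast
    rw [hcdef]
    field_simp
    ring_nf
    linear_combination (-4 : ℂ) * hsq2
  · have h1 : (1:ℝ) < Real.sqrt 2 := by
      rw [show (1:ℝ) = Real.sqrt 1 by simp]
      exact Real.sqrt_lt_sqrt (by norm_num) (by norm_num)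
    linarith

end
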